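/- Let $m \geq 2$ and let $P$ be a $2m \times 2$ complex matrix with columns $P_1, P_2$, entries $p_{ij}$. Assume $p_{2m,1} \neq 0$, $\Delta := p_{2m-1,1} p_{2m,2} - p_{2m-1,2} p_{2m,1} \neq 0$, and $P_1^\top \Omega_{2m} P_2 = 1$. Then there exists an upper unitriangular matrix $u_1 \in \mathrm{Sp}_{2m}$ such that $u_1 P$ has all entries zero except: the $(1,2)$ entry equal to $-1/p_{2m,1}$, the $(2m-1, 2)$ entry equal to $-\Delta/p_{2m,1}$, and the last row equal to $(p_{2m,1}, p_{2m,2})$. -/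

import Mathlib

open Matrix

/-- The matrix `Ω_{2n} = [[0, Fₙ], [-Fₙ, 0]]` of the standard symplectic form,
with `Fₙ` the antidiagonal permutation matrix. -/
noncomputable def OmegaMat (n : ℕ) : Matrix (Fin (2 * n)) (Fin (2 * n)) ℂ :=
  fun i j => if (i : ℕ) + (j : ℕ) = 2 * n - 1 then (if (i : ℕ) < n then 1 else -1) else 0

namespace Stmt11Aux
open Finset
variable (m : ℕ)
def eps (k : ℕ) : ℂ := if k < m then 1 else -1
def sg (x : Fin (2*m)) : Fin (2*m) := ⟨2*m-1-(x:ℕ), by have := x.isLt; omega⟩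
@[simp] lemma sg_val (x : Fin (2*m)) : (sg m x : ℕ) = 2*m-1-(x:ℕ) := by simp [sg]
lemma sg_sg (x : Fin (2*m)) : sg m (sg m x) = x := by
  have := x.isLt; apply Fin.ext; simp; omega
lemma eps_add_eps_sg (x : ℕ) (hx : x < 2*m) : eps m x + eps m (2*m-1-x) = 0 := by
  simp only [eps]; split_ifs with h1 h2 h2 <;> first | omega | ring
def dE (a b : Fin (2*m)) : ℂ := if a = b then 1 else 0
def fE (k : ℕ) (c : ℕ → ℂ) (a b : Fin (2*m)) : ℂ :=
  if 2*m-1-k ≤ (a:ℕ) ∧ (a:ℕ) < k ∧ (b:ℕ) = k then c a else 0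
def gE (k : ℕ) (c : ℕ → ℂ) (a b : Fin (2*m)) : ℂ :=
  if (a:ℕ) = 2*m-1-k ∧ 2*m-1-k < (b:ℕ) ∧ (b:ℕ) ≤ k then
    eps m (2*m-1-(b:ℕ)) * c (2*m-1-(b:ℕ)) else 0
noncomputable def UMat (k : ℕ) (c : ℕ → ℂ) : Matrix (Fin (2*m)) (Fin (2*m)) ℂ :=
  fun a b => dE m a b + fE m k c a b + gE m k c a b
lemma omega_mul (A : Matrix (Fin (2*m)) (Fin (2*m)) ℂ) (x b : Fin (2*m)) :
    (OmegaMat m * A) x b = eps m x * A (sg m x) b := by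
  have hx := x.isLt
  rw [Matrix.mul_apply, Finset.sum_eq_single (sg m x)]
  · have hcond : (x:ℕ) + ((sg m x) : ℕ) = 2*m-1 := by simp; omega
    simp only [OmegaMat, eps, if_pos hcond]
  · intro y _ hy
    have : ¬ ((x:ℕ) + (y:ℕ) = 2*m-1) := by
      intro h; apply hy; apply Fin.ext; simp; omega
    simp [OmegaMat, this]
  · simp

lemma UMat_symp (k : ℕ) (hm : 1 ≤ m) (hk1 : m ≤ k) (hk2 : k ≤ 2*m-1) (c : ℕ → ℂ) :
    (UMat m k c)ᵀ * OmegaMat m * UMat m k c = OmegaMat m := by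
  ext a b
  have ha := a.isLt; have hb := b.isLt
  rw [Matrix.mul_assoc, Matrix.mul_apply]
  have expand : ∀ x ∈ Finset.univ, (UMat m k c)ᵀ a x * (OmegaMat m * UMat m k c) x b =
      dE m x a * eps m x * dE m (sg m x) b
    + (dE m x a * eps m x * fE m k c (sg m x) b
    + (dE m x a * eps m x * gE m k c (sg m x) b
    + (fE m k c x a * eps m x * dE m (sg m x) b
    + (gE m k c x a * eps m x * dE m (sg m x) b
    + (fE m k c x a * eps m x * fE m k c (sg m x) b
    + (fE m k c x a * eps m x * gE m k c (sg m x) b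
    + (gE m k c x a * eps m x * fE m k c (sg m x) b
    + gE m k c x a * eps m x * gE m k c (sg m x) b))))))) := by
    intro x _
    rw [Matrix.transpose_apply, omega_mul]
    simp only [UMat]
    ring
  rw [Finset.sum_congr rfl expand]
  repeat rw [Finset.sum_add_distrib]
  have h1 : ∑ x : Fin (2*m), dE m x a * eps m x * dE m (sg m x) b = OmegaMat m a b := by
    rw [Finset.sum_eq_single a]
    · simp only [dE, if_pos rfl, one_mul]
      by_cases hab : (a:ℕ) + (b:ℕ) = 2*m-1
      · have hsa : sg m a = b := by apply Fin.ext; simp; omega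
        simp [hsa, OmegaMat, eps, hab]
      · have hsa : ¬ (sg m a = b) := by
          intro h; apply hab
          have : ((sg m a : Fin (2*m)) : ℕ) = (b:ℕ) := by rw [h]
          simp at this; omega
        simp [OmegaMat, hsa, hab]
    · intro y _ hy; simp [dE, hy]
    · simp
  have h2 : ∑ x : Fin (2*m), dE m x a * eps m x * fE m k c (sg m x) b
      = eps m a * fE m k c (sg m a) b := by
    rw [Finset.sum_eq_single a]
    · simp [dE]
    · intro y _ hy; simp [dE, hy]
    · simp
  have h3 : ∑ x : Fin (2*m), dE m x a * eps m x * gE m k c (sg m x) b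
      = eps m a * gE m k c (sg m a) b := by
    rw [Finset.sum_eq_single a]
    · simp [dE]
    · intro y _ hy; simp [dE, hy]
    · simp
  have h4 : ∑ x : Fin (2*m), fE m k c x a * eps m x * dE m (sg m x) b
      = fE m k c (sg m b) a * eps m (sg m b) := by
    rw [Finset.sum_eq_single (sg m b)]
    · rw [sg_sg]; simp [dE]
    · intro y _ hy
      have : ¬ (sg m y = b) := by intro h; apply hy; rw [← h, sg_sg]
      simp [dE, this]
    · simp
  have h5 : ∑ x : Fin (2*m), gE m k c x a * eps m x * dE m (sg m x) b
      = gE m k c (sg m b) a * eps m (sg m b) := by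
    rw [Finset.sum_eq_single (sg m b)]
    · rw [sg_sg]; simp [dE]
    · intro y _ hy
      have : ¬ (sg m y = b) := by intro h; apply hy; rw [← h, sg_sg]
      simp [dE, this]
    · simp
  have h6 : ∑ x : Fin (2*m), fE m k c x a * eps m x * fE m k c (sg m x) b = 0 := by
    have clean : ∀ x : Fin (2*m), fE m k c x a * eps m x * fE m k c (sg m x) b
        = if 2*m-1-k < (x:ℕ) ∧ (x:ℕ) < k ∧ (a:ℕ) = k ∧ (b:ℕ) = k then
            c x * eps m x * c (2*m-1-(x:ℕ)) else 0 := by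
      intro x
      have hx := x.isLt
      simp only [fE, sg_val]
      split_ifs with hA hB hC hB hC <;> first | (exfalso; omega) | ring
    rw [Finset.sum_congr rfl (fun x _ => clean x)]
    apply Finset.sum_involution (fun x _ => sg m x)
    · intro x _
      have hx := x.isLt
      by_cases hcond : 2*m-1-k < (x:ℕ) ∧ (x:ℕ) < k ∧ (a:ℕ) = k ∧ (b:ℕ) = k
      · rw [if_pos hcond, if_pos (by simp; omega)]
        have he := eps_add_eps_sg m x hx
        have hxx : 2*m-1-(2*m-1-(x:ℕ)) = (x:ℕ) := by omega
        simp only [sg_val, hxx]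
        linear_combination (c (x:ℕ) * c (2*m-1-(x:ℕ))) * he
      · rw [if_neg hcond, if_neg (by simp; omega)]
        ring
    · intro x _ _
      intro h
      have : ((sg m x : Fin (2*m)) : ℕ) = (x:ℕ) := by rw [h]
      have hx := x.isLt
      simp at this; omega
    · intro x _; exact Finset.mem_univ _
    · intro x _; exact sg_sg m x
  have h7 : ∑ x : Fin (2*m), fE m k c x a * eps m x * gE m k c (sg m x) b = 0 := by
    apply Finset.sum_eq_zero
    intro x _
    have hx := x.isLt
    by_cases hxk : (x:ℕ) = k
    · have hz : fE m k c x a = 0 := by simp only [fE]; rw [if_neg (by omega)]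
      rw [hz, zero_mul, zero_mul]
    · have hz : gE m k c (sg m x) b = 0 := by
        simp only [gE, sg_val]; rw [if_neg (by omega)]
      rw [hz, mul_zero]
  have h8 : ∑ x : Fin (2*m), gE m k c x a * eps m x * fE m k c (sg m x) b = 0 := by
    apply Finset.sum_eq_zero
    intro x _
    have hx := x.isLt
    by_cases hxk : (x:ℕ) = 2*m-1-k
    · have hz : fE m k c (sg m x) b = 0 := by
        simp only [fE, sg_val]; rw [if_neg (by omega)]
      rw [hz, mul_zero]
    · have hz : gE m k c x a = 0 := by simp only [gE]; rw [if_neg (by omega)]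
      rw [hz, zero_mul, zero_mul]
  have h9 : ∑ x : Fin (2*m), gE m k c x a * eps m x * gE m k c (sg m x) b = 0 := by
    apply Finset.sum_eq_zero
    intro x _
    have hx := x.isLt
    by_cases hxk : (x:ℕ) = 2*m-1-k
    · have hz : gE m k c (sg m x) b = 0 := by
        simp only [gE, sg_val]; rw [if_neg (by omega)]
      rw [hz, mul_zero]
    · have hz : gE m k c x a = 0 := by simp only [gE]; rw [if_neg (by omega)]
      rw [hz, zero_mul, zero_mul]
  rw [h1, h2, h3, h4, h5, h6, h7, h8, h9]
  have hc1 : eps m a * fE m k c (sg m a) b + gE m k c (sg m b) a * eps m (sg m b) = 0 := by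
    simp only [fE, gE, sg_val]
    by_cases h : (b:ℕ) = k ∧ 2*m-1-k < (a:ℕ) ∧ (a:ℕ) ≤ k
    · rw [if_pos (by omega), if_pos (by omega)]
      have hb' : 2*m-1-(b:ℕ) = 2*m-1-k := by omega
      have h1 : eps m (2*m-1-(b:ℕ)) = 1 := by simp only [eps]; rw [if_pos (by omega)]
      rw [hb'] at h1 ⊢
      rw [h1]
      have he := eps_add_eps_sg m a ha
      linear_combination (c (2*m-1-(a:ℕ))) * he
    · rw [if_neg (by omega), if_neg (by omega)]; ring
  have hc2 : eps m a * gE m k c (sg m a) b + fE m k c (sg m b) a * eps m (sg m b) = 0 := by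
    simp only [fE, gE, sg_val]
    by_cases h : (a:ℕ) = k ∧ 2*m-1-k < (b:ℕ) ∧ (b:ℕ) ≤ k
    · rw [if_pos (by omega), if_pos (by omega)]
      have h1 : eps m a = -1 := by simp only [eps]; rw [if_neg (by omega)]
      rw [h1]
      ring
    · rw [if_neg (by omega), if_neg (by omega)]; ring
  linear_combination hc1 + hc2

lemma UMat_mul_apply (k : ℕ) (hm : 1 ≤ m) (hk2 : k ≤ 2*m-1) (c : ℕ → ℂ)
    (P : Matrix (Fin (2*m)) (Fin 2) ℂ) (a : Fin (2*m)) (j : Fin 2) :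
    (UMat m k c * P) a j = P a j
      + (if 2*m-1-k ≤ (a:ℕ) ∧ (a:ℕ) < k then c a * P ⟨k, by omega⟩ j else 0)
      + (if (a:ℕ) = 2*m-1-k then
          ∑ x ∈ Finset.univ.filter (fun x : Fin (2*m) => 2*m-1-k < (x:ℕ) ∧ (x:ℕ) ≤ k),
            eps m (2*m-1-(x:ℕ)) * c (2*m-1-(x:ℕ)) * P x j else 0) := by
  rw [Matrix.mul_apply]
  have expand : ∀ x ∈ Finset.univ, UMat m k c a x * P x j
      = dE m a x * P x j + (fE m k c a x * P x j + gE m k c a x * P x j) := by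
    intro x _; simp only [UMat]; ring
  rw [Finset.sum_congr rfl expand, Finset.sum_add_distrib]
  have h1 : ∑ x : Fin (2*m), dE m a x * P x j = P a j := by
    rw [Finset.sum_eq_single a]
    · simp [dE]
    · intro y _ hy; simp [dE, Ne.symm hy]
    · simp
  have h23 : ∀ x ∈ Finset.univ, fE m k c a x * P x j + gE m k c a x * P x j
      = fE m k c a x * P x j + gE m k c a x * P x j := fun x _ => rfl
  rw [Finset.sum_add_distrib]
  have h2 : ∑ x : Fin (2*m), fE m k c a x * P x j
      = (if 2*m-1-k ≤ (a:ℕ) ∧ (a:ℕ) < k then c a * P ⟨k, by omega⟩ j else 0) := by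
    by_cases hc : 2*m-1-k ≤ (a:ℕ) ∧ (a:ℕ) < k
    · rw [if_pos hc, Finset.sum_eq_single (⟨k, by omega⟩ : Fin (2*m))]
      · simp only [fE]; rw [if_pos (by exact ⟨hc.1, hc.2, by simp⟩)]
      · intro y _ hy
        simp only [fE]
        rw [if_neg (fun h => hy (Fin.ext h.2.2)), zero_mul]
      · simp
    · rw [if_neg hc]
      apply Finset.sum_eq_zero
      intro x _
      simp only [fE]
      rw [if_neg (fun h => hc ⟨h.1, h.2.1⟩), zero_mul]
  have h3 : ∑ x : Fin (2*m), gE m k c a x * P x j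
      = (if (a:ℕ) = 2*m-1-k then
          ∑ x ∈ Finset.univ.filter (fun x : Fin (2*m) => 2*m-1-k < (x:ℕ) ∧ (x:ℕ) ≤ k),
            eps m (2*m-1-(x:ℕ)) * c (2*m-1-(x:ℕ)) * P x j else 0) := by
    by_cases hc : (a:ℕ) = 2*m-1-k
    · rw [if_pos hc, Finset.sum_filter]
      apply Finset.sum_congr rfl
      intro x _
      simp only [gE]
      by_cases hx2 : 2*m-1-k < (x:ℕ) ∧ (x:ℕ) ≤ k
      · rw [if_pos ⟨hc, hx2.1, hx2.2⟩, if_pos hx2]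
      · rw [if_neg (fun h => hx2 ⟨h.2.1, h.2.2⟩), if_neg hx2, zero_mul]
    · rw [if_neg hc]
      apply Finset.sum_eq_zero
      intro x _
      simp only [gE]
      rw [if_neg (fun h => hc h.1), zero_mul]
  rw [h1, h2, h3]
  ring

lemma prod_unitri {N : ℕ} (u v : Matrix (Fin N) (Fin N) ℂ)
    (hu1 : ∀ i, u i i = 1) (hu0 : ∀ i j : Fin N, (j:ℕ) < (i:ℕ) → u i j = 0)
    (hv1 : ∀ i, v i i = 1) (hv0 : ∀ i j : Fin N, (j:ℕ) < (i:ℕ) → v i j = 0) :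
    (∀ i, (u * v) i i = 1) ∧ (∀ i j : Fin N, (j:ℕ) < (i:ℕ) → (u * v) i j = 0) := by
  constructor
  · intro i
    rw [Matrix.mul_apply, Finset.sum_eq_single i]
    · rw [hu1, hv1, one_mul]
    · intro y _ hy
      have hne : (y:ℕ) ≠ (i:ℕ) := fun h => hy (Fin.ext h)
      by_cases h : (y:ℕ) < (i:ℕ)
      · rw [hu0 i y h, zero_mul]
      · rw [hv0 y i (by omega), mul_zero]
    · simp
  · intro i j hij
    rw [Matrix.mul_apply]
    apply Finset.sum_eq_zero
    intro x _
    by_cases h : (x:ℕ) < (i:ℕ)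
    · rw [hu0 i x h, zero_mul]
    · rw [hv0 x j (by omega), mul_zero]


lemma UMat_diag (k : ℕ) (c : ℕ → ℂ) (a : Fin (2*m)) : UMat m k c a a = 1 := by
  have := a.isLt
  have h1 : ¬ (2*m-1-k ≤ (a:ℕ) ∧ (a:ℕ) < k ∧ (a:ℕ) = k) := by omega
  have h2 : ¬ ((a:ℕ) = 2*m-1-k ∧ 2*m-1-k < (a:ℕ) ∧ (a:ℕ) ≤ k) := by omega
  simp only [UMat, dE, fE, gE, if_pos rfl, if_neg h1, if_neg h2]
  simp

lemma UMat_lower (k : ℕ) (c : ℕ → ℂ) (a b : Fin (2*m)) (h : (b:ℕ) < (a:ℕ)) :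
    UMat m k c a b = 0 := by
  have hne : ¬ (a = b) := by intro h'; rw [h'] at h; omega
  have h1 : ¬ (2*m-1-k ≤ (a:ℕ) ∧ (a:ℕ) < k ∧ (b:ℕ) = k) := by omega
  have h2 : ¬ ((a:ℕ) = 2*m-1-k ∧ 2*m-1-k < (b:ℕ) ∧ (b:ℕ) ≤ k) := by omega
  simp only [UMat, dE, fE, gE, if_neg hne, if_neg h1, if_neg h2]
  ring

variable (P : Matrix (Fin (2*m)) (Fin 2) ℂ)

/-- total entry access -/
noncomputable def PE (a : ℕ) (j : Fin 2) : ℂ := if h : a < 2*m then P ⟨a, h⟩ j else 0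

lemma PE_eq_mk (a : ℕ) (h : a < 2*m) (j : Fin 2) : PE m P a j = P ⟨a, h⟩ j := by
  rw [PE, dif_pos h]

lemma PE_eq (i : Fin (2*m)) (j : Fin 2) : PE m P (i:ℕ) j = P i j := by
  rw [PE, dif_pos i.isLt]

noncomputable def d1 : ℕ → ℂ := fun a =>
  if 1 ≤ a ∧ a ≤ 2*m-2 then -(PE m P a 0)/(PE m P (2*m-1) 0) else 0

noncomputable def T1 : ℂ :=
  ∑ x ∈ Finset.univ.filter (fun x : Fin (2*m) => 1 ≤ (x:ℕ) ∧ (x:ℕ) ≤ 2*m-2),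
    eps m (2*m-1-(x:ℕ)) * d1 m P (2*m-1-(x:ℕ)) * P x 0

noncomputable def g1 : ℂ := -(PE m P 0 0 + T1 m P)/(2*(PE m P (2*m-1) 0))

noncomputable def c1 : ℕ → ℂ := fun a => if a = 0 then g1 m P else d1 m P a

noncomputable def QM : Matrix (Fin (2*m)) (Fin 2) ℂ := UMat m (2*m-1) (c1 m P) * P

noncomputable def QE (a : ℕ) (j : Fin 2) : ℂ := if h : a < 2*m then QM m P ⟨a, h⟩ j else 0

lemma QE_eq_mk (a : ℕ) (h : a < 2*m) (j : Fin 2) : QE m P a j = QM m P ⟨a, h⟩ j := by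
  rw [QE, dif_pos h]

noncomputable def d2 : ℕ → ℂ := fun a =>
  if 2 ≤ a ∧ a ≤ 2*m-3 then -(QE m P a 1)/(QE m P (2*m-2) 1) else 0

noncomputable def T2 : ℂ :=
  ∑ x ∈ Finset.univ.filter (fun x : Fin (2*m) => 2 ≤ (x:ℕ) ∧ (x:ℕ) ≤ 2*m-3),
    eps m (2*m-1-(x:ℕ)) * d2 m P (2*m-1-(x:ℕ)) * QM m P x 1

noncomputable def g2 : ℂ := -(QE m P 1 1 + T2 m P)/(2*(QE m P (2*m-2) 1))

noncomputable def c2 : ℕ → ℂ := fun a => if a = 1 then g2 m P else d2 m P a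

noncomputable def RM : Matrix (Fin (2*m)) (Fin 2) ℂ := UMat m (2*m-2) (c2 m P) * QM m P


lemma QE_eq (i : Fin (2*m)) (j : Fin 2) : QE m P (i:ℕ) j = QM m P i j := by
  rw [QE, dif_pos i.isLt]

lemma Q_col0 (hm : 2 ≤ m) (hp : PE m P (2*m-1) 0 ≠ 0) (i : Fin (2*m)) :
    QM m P i 0 = if (i:ℕ) = 2*m-1 then PE m P (2*m-1) 0 else 0 := by
  have hii := i.isLt
  rw [QM, UMat_mul_apply m (2*m-1) (by omega) (by omega) (c1 m P) P i 0]
  rw [← PE_eq_mk m P (2*m-1) (by omega) 0]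
  simp only [show 2*m-1-(2*m-1) = 0 from by omega]
  by_cases hi : (i:ℕ) = 2*m-1
  · rw [if_pos hi, if_neg (by omega), if_neg (by omega), ← PE_eq m P i 0, hi]
    ring
  · rw [if_neg hi]
    by_cases hi0 : (i:ℕ) = 0
    · rw [if_pos (by omega), if_pos hi0, ← PE_eq m P i 0, hi0]
      have hc10 : c1 m P 0 = g1 m P := by simp [c1]
      have hsum : (∑ x ∈ Finset.univ.filter (fun x : Fin (2*m) => 0 < (x:ℕ) ∧ (x:ℕ) ≤ 2*m-1),
          eps m (2*m-1-(x:ℕ)) * c1 m P (2*m-1-(x:ℕ)) * P x 0)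
          = g1 m P * PE m P (2*m-1) 0 + T1 m P := by
        rw [← Finset.add_sum_erase _ _
          (show (⟨2*m-1, by omega⟩ : Fin (2*m)) ∈ _ by simp; omega)]
        congr 1
        · have hval : ((⟨2*m-1, by omega⟩ : Fin (2*m)) : ℕ) = 2*m-1 := rfl
          rw [hval, show 2*m-1-(2*m-1) = 0 from by omega]
          rw [show eps m 0 = 1 from by rw [eps, if_pos (by omega)], hc10]
          rw [← PE_eq_mk m P (2*m-1) (by omega) 0]
          ring
        · rw [show (Finset.univ.filter
              (fun x : Fin (2*m) => 0 < (x:ℕ) ∧ (x:ℕ) ≤ 2*m-1)).erase ⟨2*m-1, by omega⟩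
              = Finset.univ.filter (fun x : Fin (2*m) => 1 ≤ (x:ℕ) ∧ (x:ℕ) ≤ 2*m-2) from by
            ext y; simp [Finset.mem_erase, Fin.ext_iff]; omega]
          rw [T1]
          apply Finset.sum_congr rfl
          intro x hx
          rw [Finset.mem_filter] at hx
          have : c1 m P (2*m-1-(x:ℕ)) = d1 m P (2*m-1-(x:ℕ)) := by
            simp only [c1]; rw [if_neg (by omega)]
          rw [this]
      rw [hsum, hc10, g1]
      field_simp
      ring
    · rw [if_pos (by omega), if_neg hi0, ← PE_eq m P i 0]
      have hc : c1 m P (i:ℕ) = -(PE m P (i:ℕ) 0)/(PE m P (2*m-1) 0) := by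
        simp only [c1, d1]; rw [if_neg hi0, if_pos (by omega)]
      rw [hc]
      field_simp
      ring

lemma Q_last (hm : 2 ≤ m) (j : Fin 2) (i : Fin (2*m)) (hi : (i:ℕ) = 2*m-1) :
    QM m P i j = PE m P (2*m-1) j := by
  rw [QM, UMat_mul_apply m (2*m-1) (by omega) (by omega)]
  simp only [show 2*m-1-(2*m-1) = 0 from by omega]
  rw [if_neg (by omega), if_neg (by omega), ← PE_eq m P i j, hi]
  ring

lemma Q_mid1 (hm : 2 ≤ m) (i : Fin (2*m)) (h1 : 1 ≤ (i:ℕ)) (h2 : (i:ℕ) ≤ 2*m-2) :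
    QM m P i 1 = PE m P (i:ℕ) 1
      + (-(PE m P (i:ℕ) 0)/(PE m P (2*m-1) 0)) * PE m P (2*m-1) 1 := by
  rw [QM, UMat_mul_apply m (2*m-1) (by omega) (by omega)]
  rw [← PE_eq_mk m P (2*m-1) (by omega) 1]
  simp only [show 2*m-1-(2*m-1) = 0 from by omega]
  rw [if_pos (by omega), if_neg (by omega), ← PE_eq m P i 1]
  have hc : c1 m P (i:ℕ) = -(PE m P (i:ℕ) 0)/(PE m P (2*m-1) 0) := by
    simp only [c1, d1]; rw [if_neg (by omega), if_pos (by omega)]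
  rw [hc]
  ring

lemma v_formula (hm : 2 ≤ m) :
    QE m P (2*m-2) 1 = PE m P (2*m-2) 1
      + (-(PE m P (2*m-2) 0)/(PE m P (2*m-1) 0)) * PE m P (2*m-1) 1 := by
  rw [QE_eq_mk m P (2*m-2) (by omega) 1]
  rw [Q_mid1 m P hm ⟨2*m-2, by omega⟩ (by show 1 ≤ 2*m-2; omega) (by show 2*m-2 ≤ 2*m-2; omega)]

lemma v_target (hm : 2 ≤ m) (hp : PE m P (2*m-1) 0 ≠ 0) :
    QE m P (2*m-2) 1 = -((PE m P (2*m-2) 0 * PE m P (2*m-1) 1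
      - PE m P (2*m-2) 1 * PE m P (2*m-1) 0) / PE m P (2*m-1) 0) := by
  rw [v_formula m P hm]
  field_simp
  ring

lemma v_ne (hm : 2 ≤ m) (hp : PE m P (2*m-1) 0 ≠ 0)
    (hD : PE m P (2*m-2) 0 * PE m P (2*m-1) 1
      - PE m P (2*m-2) 1 * PE m P (2*m-1) 0 ≠ 0) :
    QE m P (2*m-2) 1 ≠ 0 := by
  rw [v_target m P hm hp]
  exact neg_ne_zero.mpr (div_ne_zero hD hp)

lemma R_col0 (hm : 2 ≤ m) (hp : PE m P (2*m-1) 0 ≠ 0) (i : Fin (2*m)) :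
    RM m P i 0 = if (i:ℕ) = 2*m-1 then PE m P (2*m-1) 0 else 0 := by
  have hii := i.isLt
  rw [RM, UMat_mul_apply m (2*m-2) (by omega) (by omega)]
  simp only [show 2*m-1-(2*m-2) = 1 from by omega]
  have hmid : QM m P ⟨2*m-2, by omega⟩ 0 = 0 := by
    rw [Q_col0 m P hm hp, if_neg (by show ¬(2*m-2 = 2*m-1); omega)]
  rw [hmid]
  have hsum : (∑ x ∈ Finset.univ.filter (fun x : Fin (2*m) => 1 < (x:ℕ) ∧ (x:ℕ) ≤ 2*m-2),
      eps m (2*m-1-(x:ℕ)) * c2 m P (2*m-1-(x:ℕ)) * QM m P x 0) = 0 := by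
    apply Finset.sum_eq_zero
    intro x hx
    rw [Finset.mem_filter] at hx
    rw [Q_col0 m P hm hp, if_neg (by omega), mul_zero]
  rw [hsum]
  simp only [mul_zero, ite_self, add_zero]
  exact Q_col0 m P hm hp i

lemma R_row_mid (hm : 2 ≤ m) (hv : QE m P (2*m-2) 1 ≠ 0) (i : Fin (2*m))
    (h1 : 2 ≤ (i:ℕ)) (h2 : (i:ℕ) ≤ 2*m-3) : RM m P i 1 = 0 := by
  have hii := i.isLt
  rw [RM, UMat_mul_apply m (2*m-2) (by omega) (by omega)]
  simp only [show 2*m-1-(2*m-2) = 1 from by omega]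
  rw [if_pos (by omega), if_neg (by omega)]
  rw [← QE_eq_mk m P (2*m-2) (by omega) 1, ← QE_eq m P i 1]
  have hc : c2 m P (i:ℕ) = -(QE m P (i:ℕ) 1)/(QE m P (2*m-2) 1) := by
    simp only [c2, d2]; rw [if_neg (by omega), if_pos (by omega)]
  rw [hc]
  field_simp
  ring

lemma R_row_one (hm : 2 ≤ m) (hv : QE m P (2*m-2) 1 ≠ 0) (i : Fin (2*m))
    (hi : (i:ℕ) = 1) : RM m P i 1 = 0 := by
  have hii := i.isLt
  rw [RM, UMat_mul_apply m (2*m-2) (by omega) (by omega)]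
  simp only [show 2*m-1-(2*m-2) = 1 from by omega]
  rw [if_pos (by omega), if_pos hi]
  rw [← QE_eq_mk m P (2*m-2) (by omega) 1, ← QE_eq m P i 1, hi]
  have hc : c2 m P 1 = g2 m P := by simp [c2]
  rw [hc]
  have hsum : (∑ x ∈ Finset.univ.filter (fun x : Fin (2*m) => 1 < (x:ℕ) ∧ (x:ℕ) ≤ 2*m-2),
      eps m (2*m-1-(x:ℕ)) * c2 m P (2*m-1-(x:ℕ)) * QM m P x 1)
      = g2 m P * QE m P (2*m-2) 1 + T2 m P := by
    rw [← Finset.add_sum_erase _ _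
      (show (⟨2*m-2, by omega⟩ : Fin (2*m)) ∈ _ by simp; omega)]
    congr 1
    · have hval : ((⟨2*m-2, by omega⟩ : Fin (2*m)) : ℕ) = 2*m-2 := rfl
      rw [hval, show 2*m-1-(2*m-2) = 1 from by omega]
      rw [show eps m 1 = 1 from by rw [eps, if_pos (by omega)], hc]
      rw [← QE_eq_mk m P (2*m-2) (by omega) 1]
      ring
    · rw [show (Finset.univ.filter
          (fun x : Fin (2*m) => 1 < (x:ℕ) ∧ (x:ℕ) ≤ 2*m-2)).erase ⟨2*m-2, by omega⟩
          = Finset.univ.filter (fun x : Fin (2*m) => 2 ≤ (x:ℕ) ∧ (x:ℕ) ≤ 2*m-3) from by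
        ext y; simp [Finset.mem_erase, Fin.ext_iff]; omega]
      rw [T2]
      apply Finset.sum_congr rfl
      intro x hx
      rw [Finset.mem_filter] at hx
      have : c2 m P (2*m-1-(x:ℕ)) = d2 m P (2*m-1-(x:ℕ)) := by
        simp only [c2]; rw [if_neg (by omega)]
      rw [this]
  rw [hsum, g2]
  field_simp
  ring

lemma R_row_2m2 (hm : 2 ≤ m) (i : Fin (2*m)) (hi : (i:ℕ) = 2*m-2) :
    RM m P i 1 = QE m P (2*m-2) 1 := by
  rw [RM, UMat_mul_apply m (2*m-2) (by omega) (by omega)]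
  simp only [show 2*m-1-(2*m-2) = 1 from by omega]
  rw [if_neg (by omega), if_neg (by omega), ← QE_eq m P i 1, hi]
  ring

lemma R_row_last (hm : 2 ≤ m) (i : Fin (2*m)) (hi : (i:ℕ) = 2*m-1) :
    RM m P i 1 = PE m P (2*m-1) 1 := by
  rw [RM, UMat_mul_apply m (2*m-2) (by omega) (by omega)]
  simp only [show 2*m-1-(2*m-2) = 1 from by omega]
  rw [if_neg (by omega), if_neg (by omega), add_zero, add_zero]
  exact Q_last m P hm 1 i hi

lemma R_row_zero (hm : 2 ≤ m) (i : Fin (2*m)) (hi : (i:ℕ) = 0) :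
    RM m P i 1 = QM m P i 1 := by
  rw [RM, UMat_mul_apply m (2*m-2) (by omega) (by omega)]
  simp only [show 2*m-1-(2*m-2) = 1 from by omega]
  rw [if_neg (by omega), if_neg (by omega)]
  ring

end Stmt11Aux



open Stmt11Aux in
/-- Lemma 4 (first matrix): if `P` is a `2m × 2` matrix with `p_{2m,1} ≠ 0`,
`Δ = p_{2m-1,1}p_{2m,2} - p_{2m-1,2}p_{2m,1} ≠ 0` and `P₁ᵀ Ω P₂ = 1`, then some
upper unitriangular symplectic `u₁` takes `P` to the matrix with `(1,2)` entry
`-1/p_{2m,1}`, `(2m-1,2)` entry `-Δ/p_{2m,1}`, last row `(p_{2m,1}, p_{2m,2})`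
and zeros elsewhere. -/
theorem stmt_11 (m : ℕ) (hm : 2 ≤ m) (P : Matrix (Fin (2 * m)) (Fin 2) ℂ)
    (hp : P ⟨2 * m - 1, by omega⟩ 0 ≠ 0)
    (hΔ : P ⟨2 * m - 2, by omega⟩ 0 * P ⟨2 * m - 1, by omega⟩ 1 -
        P ⟨2 * m - 2, by omega⟩ 1 * P ⟨2 * m - 1, by omega⟩ 0 ≠ 0)
    (hsymp : (fun i => P i 0) ⬝ᵥ (OmegaMat m).mulVec (fun i => P i 1) = 1) :
    ∃ u : Matrix (Fin (2 * m)) (Fin (2 * m)) ℂ,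
      (∀ i, u i i = 1) ∧
      (∀ i j : Fin (2 * m), (j : ℕ) < (i : ℕ) → u i j = 0) ∧
      uᵀ * OmegaMat m * u = OmegaMat m ∧
      (∀ i : Fin (2 * m),
        (u * P) i 0 = if (i : ℕ) = 2 * m - 1 then P ⟨2 * m - 1, by omega⟩ 0 else 0) ∧
      (∀ i : Fin (2 * m),
        (u * P) i 1 =
          if (i : ℕ) = 0 then -(1 / P ⟨2 * m - 1, by omega⟩ 0)
          else if (i : ℕ) = 2 * m - 2 then
            -((P ⟨2 * m - 2, by omega⟩ 0 * P ⟨2 * m - 1, by omega⟩ 1 -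
                P ⟨2 * m - 2, by omega⟩ 1 * P ⟨2 * m - 1, by omega⟩ 0) /
              P ⟨2 * m - 1, by omega⟩ 0)
          else if (i : ℕ) = 2 * m - 1 then P ⟨2 * m - 1, by omega⟩ 1
          else 0) := by
  rw [← PE_eq_mk m P (2*m-1) (by omega) 0] at hp
  rw [← PE_eq_mk m P (2*m-2) (by omega) 0, ← PE_eq_mk m P (2*m-1) (by omega) 1,
      ← PE_eq_mk m P (2*m-2) (by omega) 1, ← PE_eq_mk m P (2*m-1) (by omega) 0] at hΔ
  have hv : QE m P (2*m-2) 1 ≠ 0 := v_ne m P hm hp hΔ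
  set u : Matrix (Fin (2*m)) (Fin (2*m)) ℂ :=
    UMat m (2*m-2) (c2 m P) * UMat m (2*m-1) (c1 m P) with hu
  have hUP : u * P = RM m P := by
    rw [hu, Matrix.mul_assoc]
    rfl
  have hdiag := prod_unitri (UMat m (2*m-2) (c2 m P)) (UMat m (2*m-1) (c1 m P))
    (UMat_diag m (2*m-2) (c2 m P)) (UMat_lower m (2*m-2) (c2 m P))
    (UMat_diag m (2*m-1) (c1 m P)) (UMat_lower m (2*m-1) (c1 m P))
  have husymp : uᵀ * OmegaMat m * u = OmegaMat m := by
    have hs1 := UMat_symp m (2*m-1) (by omega) (by omega) (by omega) (c1 m P)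
    have hs2 := UMat_symp m (2*m-2) (by omega) (by omega) (by omega) (c2 m P)
    rw [hu]
    set A := UMat m (2*m-2) (c2 m P)
    set B := UMat m (2*m-1) (c1 m P)
    calc (A*B)ᵀ * OmegaMat m * (A*B) = Bᵀ*((Aᵀ*(OmegaMat m * A))*B) := by
          rw [Matrix.transpose_mul]; simp only [Matrix.mul_assoc]
    _ = Bᵀ*(OmegaMat m * B) := by
          rw [show Aᵀ*(OmegaMat m * A) = OmegaMat m from by
            rw [← Matrix.mul_assoc]; exact hs2]
    _ = OmegaMat m := by rw [← Matrix.mul_assoc]; exact hs1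
  have hcol0 : ∀ i : Fin (2*m),
      (u * P) i 0 = if (i:ℕ) = 2*m-1 then PE m P (2*m-1) 0 else 0 := by
    intro i
    rw [hUP]
    exact R_col0 m P hm hp i
  -- the (0,1) entry via preservation of the symplectic pairing
  have hpres : (fun i => RM m P i 0) ⬝ᵥ (OmegaMat m).mulVec (fun i => RM m P i 1) = 1 := by
    have h1 : (fun i => RM m P i 0) = u.mulVec (fun k => P k 0) := by
      funext i
      rw [← hUP]
      simp [Matrix.mulVec, dotProduct, Matrix.mul_apply]
    have h2 : (fun i => RM m P i 1) = u.mulVec (fun k => P k 1) := by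
      funext i
      rw [← hUP]
      simp [Matrix.mulVec, dotProduct, Matrix.mul_apply]
    rw [h1, h2, Matrix.mulVec_mulVec, ← Matrix.vecMul_transpose,
        Matrix.dotProduct_mulVec, Matrix.vecMul_vecMul,
        ← Matrix.mul_assoc, husymp, ← Matrix.dotProduct_mulVec]
    exact hsymp
  have heval : (fun i => RM m P i 0) ⬝ᵥ (OmegaMat m).mulVec (fun i => RM m P i 1)
      = PE m P (2*m-1) 0 * (-(RM m P ⟨0, by omega⟩ 1)) := by
    rw [dotProduct]
    rw [Finset.sum_eq_single (⟨2*m-1, by omega⟩ : Fin (2*m))]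
    · rw [R_col0 m P hm hp, if_pos rfl]
      congr 1
      rw [Matrix.mulVec, dotProduct]
      rw [Finset.sum_eq_single (⟨0, by omega⟩ : Fin (2*m))]
      · have hOm : OmegaMat m ⟨2*m-1, by omega⟩ (⟨0, by omega⟩ : Fin (2*m)) = -1 := by
          simp only [OmegaMat]
          rw [if_pos (by show 2*m-1+0 = 2*m-1; omega), if_neg (by show ¬(2*m-1 < m); omega)]
        rw [hOm]
        ring
      · intro y _ hy
        have hOm : OmegaMat m ⟨2*m-1, by omega⟩ y = 0 := by
          simp only [OmegaMat]
          rw [if_neg (by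
            intro h
            apply hy
            apply Fin.ext
            have : (2*m-1) + (y:ℕ) = 2*m-1 := h
            show (y:ℕ) = 0
            omega)]
        rw [hOm, zero_mul]
      · simp
    · intro y _ hy
      rw [R_col0 m P hm hp, if_neg (fun h => hy (Fin.ext h)), zero_mul]
    · simp
  rw [heval] at hpres
  have hy0 : RM m P ⟨0, by omega⟩ 1 = -(1 / PE m P (2*m-1) 0) := by
    field_simp at hpres ⊢
    linear_combination -hpres
  refine ⟨u, hdiag.1, hdiag.2, husymp, ?_, ?_⟩
  · intro i
    rw [hcol0 i, PE_eq_mk m P (2*m-1) (by omega) 0]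
  · intro i
    have hii := i.isLt
    rw [hUP]
    by_cases hi0 : (i:ℕ) = 0
    · rw [if_pos hi0, show i = (⟨0, by omega⟩ : Fin (2*m)) from Fin.ext hi0, hy0,
        PE_eq_mk m P (2*m-1) (by omega) 0]
    · rw [if_neg hi0]
      by_cases hi2 : (i:ℕ) = 2*m-2
      · rw [if_pos hi2, R_row_2m2 m P hm i hi2, v_target m P hm hp,
          PE_eq_mk m P (2*m-2) (by omega) 0, PE_eq_mk m P (2*m-1) (by omega) 1,
          PE_eq_mk m P (2*m-2) (by omega) 1, PE_eq_mk m P (2*m-1) (by omega) 0]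
      · rw [if_neg hi2]
        by_cases hiL : (i:ℕ) = 2*m-1
        · rw [if_pos hiL, R_row_last m P hm i hiL, PE_eq_mk m P (2*m-1) (by omega) 1]
        · rw [if_neg hiL]
          by_cases hi1 : (i:ℕ) = 1
          · exact R_row_one m P hm hv i hi1
          · exact R_row_mid m P hm hv i (by omega) (by omega)
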